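/- Let u be a function meromorphic on ℂ with period 2πi, i.e. u(z + 2πi) = u(z) for all z. Suppose that u has only finitely many poles in the strip D = {z ∈ ℂ : 0 ≤ Im z < 2π} and that for every ζ ∈ ℂ the equation u(z) = ζ has only finitely many solutions z ∈ D. Then there exists a rational function R such that u(z) = R(e^z) for every z that is not a pole of u. -/

import Mathlib

open Complex Filter Topology

noncomputable section

/-- `u` has a pole at `z₀`: `‖u z‖ → ∞` as `z → z₀`, `z ≠ z₀`. -/
def IsPoleAt (u : ℂ → ℂ) (z₀ : ℂ) : Prop :=
  Tendsto (fun z => ‖u z‖) (𝓝[≠] z₀) atTop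

/-- `u` is meromorphic on all of `ℂ`: at every point it is either analytic or has a pole. -/
def MeromorphicOnPlane (u : ℂ → ℂ) : Prop :=
  ∀ z : ℂ, AnalyticAt ℂ u z ∨ IsPoleAt u z

open Set Metric

namespace RatExpAux

/-- Punctured balls in `ℂ` are infinite. -/
lemma infinite_punctured_ball (a : ℂ) {r : ℝ} (hr : 0 < r) :
    (ball a r \ {a}).Infinite := by
  apply Set.infinite_of_injective_forall_mem
    (f := fun n : ℕ => a + ((r / (n + 2) : ℝ) : ℂ))
  · intro n m hnm
    simp only [add_right_inj, Complex.ofReal_inj] at hnm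
    rw [div_eq_div_iff (by positivity) (by positivity)] at hnm
    have h2 := mul_left_cancel₀ hr.ne' hnm
    have h3 : (m:ℝ) = n := by linarith
    exact_mod_cast h3.symm
  · intro n
    have hpos : (0:ℝ) < r / (n + 2) := by positivity
    have hlt : r / (n + 2) < r := by
      rw [div_lt_iff₀ (by positivity)]
      nlinarith
    constructor
    · simp only [mem_ball, dist_self_add_left]
      rw [Complex.norm_real, Real.norm_eq_abs, abs_of_pos hpos]; exact hlt
    · simp only [mem_singleton_iff, add_eq_left]
      intro h
      rw [Complex.ofReal_eq_zero] at h
      exact hpos.ne' h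


/-- Separation from a finite set. -/
lemma exists_sep {A : Set ℂ} (hA : A.Finite) (a : ℂ) :
    ∃ ρ > 0, ∀ b ∈ A, b ≠ a → ρ ≤ dist a b := by
  classical
  have hA' : (A \ {a}).Finite := hA.diff
  rcases Set.eq_empty_or_nonempty (A \ {a}) with h | h
  · refine ⟨1, one_pos, fun b hb hba => ?_⟩
    exfalso
    have hmem : b ∈ A \ {a} := ⟨hb, hba⟩
    rw [h] at hmem
    exact Set.notMem_empty b hmem
  · set t := hA'.toFinset with ht
    have htn : t.Nonempty := by rwa [ht, Set.Finite.toFinset_nonempty]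
    set ρ := (t.image (dist a)).min' (htn.image _) with hρ
    have hρpos : 0 < ρ := by
      have := (t.image (dist a)).min'_mem (htn.image _)
      rw [← hρ] at this
      rcases Finset.mem_image.mp this with ⟨b, hb, hba⟩
      rw [ht, Set.Finite.mem_toFinset] at hb
      rw [← hba]
      exact dist_pos.mpr (Ne.symm hb.2)
    refine ⟨ρ, hρpos, fun b hb hba => ?_⟩
    apply Finset.min'_le
    exact Finset.mem_image.mpr ⟨b, by rw [ht, Set.Finite.mem_toFinset]; exact ⟨hb, hba⟩, rfl⟩

/-- Open mapping for analytic non-locally-constant functions. -/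
lemma image_mem_nhds_of_analyticAt {f : ℂ → ℂ} {w : ℂ} (hf : AnalyticAt ℂ f w)
    (hnc : ¬ ∀ᶠ v in 𝓝 w, f v = f w) {s : Set ℂ} (hs : s ∈ 𝓝 w) :
    f '' s ∈ 𝓝 (f w) :=
  (hf.eventually_constant_or_nhds_le_map_nhds.resolve_left hnc) (Filter.image_mem_map hs)

/-- Polynomial evaluation growth bound. -/
lemma poly_eval_bound (Q : Polynomial ℂ) :
    ∃ C : ℝ, 0 ≤ C ∧ ∀ w : ℂ, 1 ≤ ‖w‖ → ‖Q.eval w‖ ≤ C * ‖w‖ ^ Q.natDegree := by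
  refine ⟨∑ i ∈ Finset.range (Q.natDegree + 1), ‖Q.coeff i‖,
    Finset.sum_nonneg fun i _ => norm_nonneg _, fun w hw => ?_⟩
  rw [Polynomial.eval_eq_sum_range]
  refine (norm_sum_le _ _).trans ?_
  rw [Finset.sum_mul]
  apply Finset.sum_le_sum
  intro i hi
  rw [norm_mul, norm_pow]
  apply mul_le_mul_of_nonneg_left _ (norm_nonneg _)
  exact pow_le_pow_right₀ hw (by have := Finset.mem_range.mp hi; omega)

/-- Liouville with polynomial growth. -/
lemma poly_liouville : ∀ (n : ℕ) (f : ℂ → ℂ) (C : ℝ), Differentiable ℂ f →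
    (∀ w : ℂ, 1 ≤ ‖w‖ → ‖f w‖ ≤ C * ‖w‖ ^ n) →
    ∃ P : Polynomial ℂ, ∀ w, f w = P.eval w := by
  intro n
  induction n with
  | zero =>
    intro f C hf hb
    obtain ⟨M, hM⟩ := (isCompact_closedBall (0:ℂ) 1).exists_bound_of_continuousOn
      hf.continuous.continuousOn
    have hbd : Bornology.IsBounded (Set.range f) := by
      rw [isBounded_iff_forall_norm_le]
      refine ⟨max C M, ?_⟩
      rintro x ⟨w, rfl⟩
      rcases le_or_gt 1 ‖w‖ with h | h
      · simpa using (hb w h).trans (le_max_left _ _)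
      · exact (hM w (by simpa [mem_closedBall, dist_zero_right] using h.le)).trans (le_max_right _ _)
    obtain ⟨c, hc⟩ := hf.exists_eq_const_of_bounded hbd
    exact ⟨Polynomial.C c, fun w => by simp [hc]⟩
  | succ n ih =>
    intro f C hf hb
    set g := dslope f 0 with hg
    have hgd : Differentiable ℂ g := by
      rw [← differentiableOn_univ]
      exact (Complex.differentiableOn_dslope univ_mem).mpr hf.differentiableOn
    have hgb : ∀ w : ℂ, 1 ≤ ‖w‖ → ‖g w‖ ≤ (C + ‖f 0‖) * ‖w‖ ^ n := by
      intro w hw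
      have hw0 : w ≠ 0 := by rintro rfl; simp at hw; linarith
      have h1 : (w - 0) • g w = f w - f 0 := sub_smul_dslope f 0 w
      rw [sub_zero, smul_eq_mul] at h1
      have h2 : g w = (f w - f 0) / w := by
        field_simp [hw0] at h1 ⊢
        linear_combination h1
      rw [h2, norm_div]
      rw [div_le_iff₀ (by positivity : (0:ℝ) < ‖w‖)]
      calc ‖f w - f 0‖ ≤ ‖f w‖ + ‖f 0‖ := norm_sub_le _ _
        _ ≤ C * ‖w‖ ^ (n+1) + ‖f 0‖ * ‖w‖ ^ (n+1) := by
            refine add_le_add (hb w hw) ?_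
            have h3 : (1:ℝ) ≤ ‖w‖ ^ (n+1) := one_le_pow₀ hw
            nlinarith [norm_nonneg (f 0)]
        _ = (C + ‖f 0‖) * ‖w‖ ^ n * ‖w‖ := by ring
    obtain ⟨P₁, hP₁⟩ := ih g (C + ‖f 0‖) hgd hgb
    refine ⟨Polynomial.C (f 0) + Polynomial.X * P₁, fun w => ?_⟩
    have h1 : (w - 0) • g w = f w - f 0 := sub_smul_dslope f 0 w
    rw [sub_zero, smul_eq_mul] at h1
    simp only [Polynomial.eval_add, Polynomial.eval_C, Polynomial.eval_mul, Polynomial.eval_X]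
    rw [← hP₁ w]
    linear_combination - h1

/-- If an analytic function on a punctured ball has finite fibers, then some value is
avoided by a definite margin on a smaller punctured ball. -/
lemma exists_avoided_value {f : ℂ → ℂ} {a : ℂ} {r : ℝ} (hr : 0 < r)
    (hf : DifferentiableOn ℂ f (ball a r \ {a}))
    (hfib : ∀ ζ : ℂ, {w | w ∈ ball a r \ {a} ∧ f w = ζ}.Finite) :
    ∃ ζ : ℂ, ∃ ε > 0, ∃ δ, 0 < δ ∧ δ ≤ r ∧ ∀ w ∈ ball a δ \ {a}, ε ≤ ‖f w - ζ‖ := by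
  classical
  by_contra hcon
  push_neg at hcon
  have hd : ∀ (ζ : ℂ) (ε δ : ℝ), 0 < ε → 0 < δ → δ ≤ r →
      ∃ w ∈ ball a δ \ {a}, ‖f w - ζ‖ < ε := by
    intro ζ ε δ hε hδ hδr
    obtain ⟨w, hw1, hw2⟩ := hcon ζ ε hε δ hδ hδr
    exact ⟨w, hw1, hw2⟩
  have hUopen : IsOpen (ball a r \ {a}) := isOpen_ball.sdiff isClosed_singleton
  have hopen : ∀ w ∈ ball a r \ {a}, ∀ ρ : ℝ, 0 < ρ →
      f '' (ball w ρ) ∈ 𝓝 (f w) := by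
    intro w hw ρ hρ
    have han : AnalyticAt ℂ f w := hf.analyticAt (hUopen.mem_nhds hw)
    have hnc : ¬ ∀ᶠ v in 𝓝 w, f v = f w := by
      intro hev
      obtain ⟨ρ', hρ', hball⟩ := Metric.eventually_nhds_iff_ball.mp
        (hev.and (hUopen.eventually_mem hw))
      refine absurd (hfib (f w)) ((infinite_punctured_ball w hρ').mono fun v hv => ?_)
      exact ⟨(hball v hv.1).2, (hball v hv.1).1⟩
    exact image_mem_nhds_of_analyticAt han hnc (ball_mem_nhds w hρ)
  -- invariant
  set Good : ℂ × ℂ × ℝ → Prop := fun p =>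
    p.1 ∈ ball a r \ {a} ∧ 5 * dist p.1 a < 4 * r ∧ 0 < p.2.2 ∧
      closedBall p.2.1 p.2.2 ⊆ f '' (ball p.1 (dist p.1 a / 4)) with hGoodDef
  have hBsub : ∀ w : ℂ, w ∈ ball a r \ {a} → 5 * dist w a < 4 * r →
      ball w (dist w a / 4) ⊆ ball a r \ {a} := by
    intro w hw h5 v hv
    have hne : w ≠ a := fun h => hw.2 (h ▸ rfl)
    have hdw : 0 < dist w a := dist_pos.mpr hne
    rw [mem_ball] at hv
    have h1 : dist v a ≤ dist v w + dist w a := dist_triangle v w a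
    have h2 : dist w a ≤ dist w v + dist v a := dist_triangle w v a
    rw [dist_comm w v] at h2
    have hlow : 0 < dist v a := by linarith
    exact ⟨mem_ball.mpr (by linarith), fun hva => (dist_pos.mp hlow) (Set.mem_singleton_iff.mp hva)⟩
  -- base point
  obtain ⟨w₀, hw₀mem, -⟩ := hd 0 1 (r/2) one_pos (by positivity) (by linarith)
  have hw₀U : w₀ ∈ ball a r \ {a} :=
    ⟨ball_subset_ball (by linarith) hw₀mem.1, hw₀mem.2⟩
  have hw₀5 : 5 * dist w₀ a < 4 * r := by
    have := mem_ball.mp hw₀mem.1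
    linarith
  have hd₀ : 0 < dist w₀ a := dist_pos.mpr (fun h => hw₀U.2 (h ▸ rfl))
  obtain ⟨ε₀, hε₀, hsub₀⟩ := Metric.nhds_basis_closedBall.mem_iff.mp
    (hopen w₀ hw₀U (dist w₀ a / 4) (by positivity))
  have good₀ : Good (w₀, f w₀, ε₀) := ⟨hw₀U, hw₀5, hε₀, hsub₀⟩
  -- inductive step
  have hstep : ∀ p, Good p → ∃ p', Good p' ∧ 4 * dist p'.1 a < dist p.1 a ∧
      closedBall p'.2.1 p'.2.2 ⊆ closedBall p.2.1 p.2.2 := by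
    rintro ⟨w, ζ, ε⟩ ⟨hwU, hw5, hε, -⟩
    have hdw : 0 < dist w a := dist_pos.mpr (fun h => hwU.2 (h ▸ rfl))
    obtain ⟨w', hw'mem, hw'val⟩ := hd ζ ε (dist w a / 4) hε (by positivity) (by linarith)
    have hw'd : dist w' a < dist w a / 4 := mem_ball.mp hw'mem.1
    have hw'U : w' ∈ ball a r \ {a} :=
      ⟨mem_ball.mpr (by linarith), hw'mem.2⟩
    have hw'5 : 5 * dist w' a < 4 * r := by linarith
    have hd' : 0 < dist w' a := dist_pos.mpr (fun h => hw'mem.2 (h ▸ rfl))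
    have hO : f '' (ball w' (dist w' a / 4)) ∈ 𝓝 (f w') :=
      hopen w' hw'U _ (by positivity)
    have hs : 0 < ε - dist (f w') ζ := by
      rw [dist_eq_norm]; linarith
    obtain ⟨ε', hε', hsub'⟩ := Metric.nhds_basis_closedBall.mem_iff.mp
      (inter_mem hO (ball_mem_nhds (f w') hs))
    refine ⟨(w', f w', ε'), ⟨hw'U, hw'5, hε', fun x hx => (hsub' hx).1⟩, by simp only; linarith, ?_⟩
    intro x hx
    have hx2 := (hsub' hx).2
    rw [mem_ball] at hx2
    rw [mem_closedBall]
    calc dist x ζ ≤ dist x (f w') + dist (f w') ζ := dist_triangle _ _ _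
      _ ≤ ε := by linarith
  -- build the sequence
  let next : {p // Good p} → {p // Good p} := fun p =>
    ⟨(hstep p.1 p.2).choose, (hstep p.1 p.2).choose_spec.1⟩
  let seq : ℕ → {p // Good p} := fun n => next^[n] ⟨(w₀, f w₀, ε₀), good₀⟩
  have hseq : ∀ n, seq (n + 1) = next (seq n) := fun n =>
    Function.iterate_succ_apply' next n _
  have hGood : ∀ n, Good (seq n).1 := fun n => (seq n).2
  have hrel : ∀ n, 4 * dist (seq (n+1)).1.1 a < dist (seq n).1.1 a ∧
      closedBall (seq (n+1)).1.2.1 (seq (n+1)).1.2.2 ⊆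
        closedBall (seq n).1.2.1 (seq n).1.2.2 := by
    intro n
    rw [hseq n]
    exact ⟨(hstep (seq n).1 (seq n).2).choose_spec.2.1,
      (hstep (seq n).1 (seq n).2).choose_spec.2.2⟩
  set d : ℕ → ℝ := fun n => dist (seq n).1.1 a with hdDef
  have hdpos : ∀ n, 0 < d n := fun n =>
    dist_pos.mpr (fun h => (hGood n).1.2 (h ▸ rfl))
  have hdec : ∀ n, 4 * d (n+1) < d n := fun n => (hrel n).1
  have hanti : ∀ k l, k ≤ l → d l ≤ d k := by
    intro k l hkl
    induction l with
    | zero => simp_all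
    | succ m ih =>
      rcases Nat.lt_or_ge k (m+1) with h | h
      · have h1 := ih (Nat.lt_succ_iff.mp h)
        have h2 := hdec m
        have h3 := hdpos (m+1)
        linarith
      · have : k = m + 1 := le_antisymm hkl h
        subst this; rfl
  have hlt4 : ∀ k l, k < l → d l < d k / 4 := by
    intro k l hkl
    have h1 : d l ≤ d (k+1) := hanti (k+1) l hkl
    have h2 := hdec k
    linarith
  -- nested compact sets
  have hnest : ∀ n, closedBall (seq (n+1)).1.2.1 (seq (n+1)).1.2.2 ⊆
      closedBall (seq n).1.2.1 (seq n).1.2.2 := fun n => (hrel n).2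
  obtain ⟨ζs, hζs⟩ := IsCompact.nonempty_iInter_of_sequence_nonempty_isCompact_isClosed
    (fun n => closedBall (seq n).1.2.1 (seq n).1.2.2) hnest
    (fun n => ⟨(seq n).1.2.1, mem_closedBall_self (hGood n).2.2.1.le⟩)
    (isCompact_closedBall _ _) (fun n => isClosed_closedBall)
  have hζmem : ∀ n, ζs ∈ f '' (ball (seq n).1.1 (d n / 4)) := by
    intro n
    exact (hGood n).2.2.2 (by exact Set.mem_iInter.mp hζs n)
  have hv : ∀ n, ∃ v, v ∈ ball (seq n).1.1 (d n / 4) ∧ f v = ζs := by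
    intro n
    obtain ⟨v, hv1, hv2⟩ := hζmem n
    exact ⟨v, hv1, hv2⟩
  choose v hv1 hv2 using hv
  have hvU : ∀ n, v n ∈ ball a r \ {a} := fun n =>
    hBsub _ (hGood n).1 (hGood n).2.1 (hv1 n)
  have hvd_up : ∀ n, dist (v n) a < 5 * d n / 4 := by
    intro n
    have h1 := mem_ball.mp (hv1 n)
    have h2 := dist_triangle (v n) (seq n).1.1 a
    linarith
  have hvd_lo : ∀ n, 3 * d n / 4 < dist (v n) a := by
    intro n
    have h1 := mem_ball.mp (hv1 n)
    have h2 := dist_triangle (seq n).1.1 (v n) a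
    rw [dist_comm (seq n).1.1 (v n)] at h2
    linarith
  have hvne : ∀ k l, k < l → dist (v l) a < dist (v k) a := by
    intro k l hkl
    have h1 := hvd_up l
    have h2 := hvd_lo k
    have h3 := hlt4 k l hkl
    have h4 := hdpos k
    linarith
  have hinj : Function.Injective v := by
    intro k l hkl
    by_contra hne
    rcases Nat.lt_or_ge k l with h | h
    · have hx := hvne k l h
      rw [hkl] at hx
      exact lt_irrefl _ hx
    · have h' : l < k := lt_of_le_of_ne h (Ne.symm hne)
      have hx := hvne l k h'
      rw [hkl] at hx
      exact lt_irrefl _ hx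
  refine absurd (hfib ζs) ?_
  refine Set.infinite_of_injective_forall_mem hinj (fun n => ⟨hvU n, hv2 n⟩)


/-- Non-essential singularity: some power of `(w - a)` tames `f` near `a`. -/
lemma exists_pow_bounded {f : ℂ → ℂ} {a : ℂ} {r : ℝ} (hr : 0 < r)
    (hf : DifferentiableOn ℂ f (ball a r \ {a}))
    (hfib : ∀ ζ : ℂ, {w | w ∈ ball a r \ {a} ∧ f w = ζ}.Finite) :
    ∃ (n : ℕ) (C : ℝ) (δ : ℝ), 0 ≤ C ∧ 0 < δ ∧
      ∀ w ∈ ball a δ \ {a}, ‖(w - a) ^ n * f w‖ ≤ C := by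
  obtain ⟨ζ, ε, hε, δ₁, hδ₁, hδ₁r, havoid⟩ := exists_avoided_value hr hf hfib
  set g : ℂ → ℂ := fun w => (f w - ζ)⁻¹ with hgdef
  have hne : ∀ w ∈ ball a δ₁ \ {a}, f w - ζ ≠ 0 := by
    intro w hw h0
    have := havoid w hw
    rw [h0, norm_zero] at this
    linarith
  have hgd : DifferentiableOn ℂ g (ball a δ₁ \ {a}) := by
    apply DifferentiableOn.inv
    · exact (hf.mono (Set.diff_subset_diff_left (ball_subset_ball hδ₁r))).sub
        (differentiableOn_const ζ)
    · exact hne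
  have hgb : ∀ w ∈ ball a δ₁ \ {a}, ‖g w‖ ≤ ε⁻¹ := by
    intro w hw
    rw [hgdef]
    simp only [norm_inv]
    exact inv_anti₀ hε (havoid w hw)
  -- removable singularity for g
  set G := Function.update g a (limUnder (𝓝[≠] a) g) with hGdef
  have hGd : DifferentiableOn ℂ G (ball a δ₁) := by
    apply Complex.differentiableOn_update_limUnder_of_bddAbove (ball_mem_nhds a hδ₁) hgd
    rw [bddAbove_def]
    refine ⟨ε⁻¹, ?_⟩
    rintro x ⟨w, hw, rfl⟩
    exact hgb w hw
  have hGan : AnalyticAt ℂ G a := hGd.analyticAt (ball_mem_nhds a hδ₁)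
  have hGne : ¬ ∀ᶠ v in 𝓝 a, G v = 0 := by
    intro hev
    have h1 : ∀ᶠ v in 𝓝[≠] a, G v = 0 := hev.filter_mono nhdsWithin_le_nhds
    have h2 : ∀ᶠ v in 𝓝[≠] a, v ∈ ball a δ₁ \ {a} := by
      filter_upwards [eventually_nhdsWithin_of_eventually_nhds
        (ball_mem_nhds a hδ₁ : ball a δ₁ ∈ 𝓝 a), eventually_mem_nhdsWithin] with v hv1 hv2
      exact ⟨hv1, hv2⟩
    obtain ⟨v, hv0, hvmem⟩ := (h1.and h2).exists
    have : G v = g v := Function.update_of_ne (fun h => hvmem.2 (by rw [h]; exact rfl)) _ _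
    rw [this] at hv0
    exact inv_ne_zero (hne v hvmem) hv0
  obtain ⟨n, h, hhan, hha, hheq⟩ :=
    (hGan.exists_eventuallyEq_pow_smul_nonzero_iff).mpr hGne
  -- h is bounded below near a
  have hhb : ∀ᶠ v in 𝓝 a, ‖h a‖ / 2 ≤ ‖h v‖ := by
    have hc : ContinuousAt h a := hhan.continuousAt
    have : ∀ᶠ v in 𝓝 a, ‖h v - h a‖ < ‖h a‖ / 2 := by
      have h0 : 0 < ‖h a‖ / 2 := by
        have := norm_pos_iff.mpr hha
        linarith
      exact Metric.tendsto_nhds.mp hc _ h0 |>.mono (by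
        intro v hv; rwa [dist_eq_norm] at hv)
    filter_upwards [this] with v hv
    have := norm_sub_norm_le (h v) (h a)
    calc ‖h a‖ / 2 = ‖h a‖ - ‖h a‖ / 2 := by ring
      _ ≤ ‖h a‖ - ‖h v - h a‖ := by linarith
      _ ≤ ‖h v‖ := by
          have h3 := norm_sub_norm_le (h a) (h v)
          rw [norm_sub_rev] at h3
          linarith
  -- collect all eventual facts on 𝓝[≠] a
  have hfact : ∀ᶠ v in 𝓝[≠] a,
      v ∈ ball a δ₁ \ {a} ∧ G v = (v - a) ^ n • h v ∧ ‖h a‖ / 2 ≤ ‖h v‖ := by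
    have h2 : ∀ᶠ v in 𝓝[≠] a, v ∈ ball a δ₁ \ {a} := by
      filter_upwards [eventually_nhdsWithin_of_eventually_nhds
        (ball_mem_nhds a hδ₁ : ball a δ₁ ∈ 𝓝 a), eventually_mem_nhdsWithin] with v hv1 hv2
      exact ⟨hv1, hv2⟩
    filter_upwards [h2, eventually_nhdsWithin_of_eventually_nhds hheq,
      eventually_nhdsWithin_of_eventually_nhds hhb] with v a1 a2 a3
    exact ⟨a1, a2, a3⟩
  obtain ⟨δ, hδpos, hδsub⟩ := Metric.mem_nhdsWithin_iff.mp hfact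
  have hhapos : 0 < ‖h a‖ := norm_pos_iff.mpr hha
  refine ⟨n, δ ^ n * ‖ζ‖ + 2 / ‖h a‖, δ, by positivity, hδpos, ?_⟩
  intro w hw
  have hwmem : w ∈ ball a δ ∩ {a}ᶜ := ⟨hw.1, hw.2⟩
  obtain ⟨hw1, hw2, hw3⟩ := hδsub hwmem
  have hwa : w ≠ a := fun h => hw.2 (by rw [h]; exact rfl)
  have hGw : G w = g w := Function.update_of_ne hwa _ _
  have hgw_ne : g w ≠ 0 := inv_ne_zero (hne w hw1)
  have hhw_ne : h w ≠ 0 := by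
    intro h0
    rw [h0, norm_zero] at hw3
    linarith
  -- f w = ζ + (g w)⁻¹ and g w = (w-a)^n * h w
  have hfw : f w = ζ + (g w)⁻¹ := by
    rw [hgdef]
    simp only
    rw [inv_inv]
    ring
  have hgw : g w = (w - a) ^ n * h w := by
    rw [← hGw, hw2, smul_eq_mul]
  have hpow_ne : (w - a) ^ n ≠ 0 := pow_ne_zero _ (sub_ne_zero.mpr hwa)
  have key : (w - a) ^ n * f w = (w - a) ^ n * ζ + (h w)⁻¹ := by
    rw [hfw, hgw]
    field_simp
  rw [key]
  refine (norm_add_le _ _).trans ?_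
  rw [norm_mul, norm_pow, norm_inv]
  have hwd : ‖w - a‖ ≤ δ := by
    have := mem_ball.mp hw.1
    rw [dist_eq_norm] at this
    linarith
  refine add_le_add ?_ ?_
  · refine mul_le_mul_of_nonneg_right ?_ (norm_nonneg _)
    exact pow_le_pow_left₀ (norm_nonneg _) hwd n
  · rw [div_eq_mul_inv, two_mul]
    have h1 : ‖h w‖⁻¹ ≤ (‖h a‖ / 2)⁻¹ := by
      apply inv_anti₀ (by positivity) hw3
    rw [inv_div] at h1
    calc ‖h w‖⁻¹ ≤ 2 / ‖h a‖ := by rw [div_eq_mul_inv] at h1 ⊢; linarith [h1]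
      _ = ‖h a‖⁻¹ + ‖h a‖⁻¹ := by rw [div_eq_mul_inv]; ring


/-- Glue: a function differentiable off a finite set and bounded near each of its points
extends to an entire function. -/
lemma glue_entire {A : Set ℂ} (hA : A.Finite) {h : ℂ → ℂ}
    (hd : DifferentiableOn ℂ h Aᶜ)
    (hb : ∀ a ∈ A, ∃ δ > 0, ∃ C, ∀ w ∈ ball a δ \ {a}, ‖h w‖ ≤ C) :
    ∃ g : ℂ → ℂ, Differentiable ℂ g ∧ ∀ w ∉ A, g w = h w := by
  classical
  have hAc : IsClosed A := hA.isClosed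
  set g : ℂ → ℂ := fun w => if w ∈ A then limUnder (𝓝[≠] w) h else h w with hgdef
  have hgh : ∀ w ∉ A, g w = h w := by
    intro w hw; simp only [hgdef, if_neg hw]
  refine ⟨g, ?_, hgh⟩
  intro w₀
  by_cases hw₀ : w₀ ∈ A
  · -- removable singularity
    obtain ⟨δ, hδpos, C, hC⟩ := hb w₀ hw₀
    obtain ⟨ρ₀, hρ₀pos, hρ₀⟩ := exists_sep hA w₀
    set ρ := min δ ρ₀ with hρdef
    have hρpos : 0 < ρ := lt_min hδpos hρ₀pos
    have hball : ball w₀ ρ ∩ A = {w₀} := by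
      apply Set.Subset.antisymm
      · rintro x ⟨hx1, hx2⟩
        by_contra hne
        rw [Set.mem_singleton_iff] at hne
        have h1 : ρ₀ ≤ dist w₀ x := hρ₀ x hx2 hne
        rw [mem_ball, dist_comm] at hx1
        have h2 : ρ ≤ ρ₀ := min_le_right δ ρ₀
        linarith
      · rintro x hx
        rw [Set.mem_singleton_iff] at hx
        subst hx
        exact ⟨mem_ball_self hρpos, hw₀⟩
    have hdiff : DifferentiableOn ℂ h (ball w₀ ρ \ {w₀}) := by
      apply hd.mono
      intro x hx
      intro hxA
      have : x ∈ ball w₀ ρ ∩ A := ⟨hx.1, hxA⟩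
      rw [hball] at this
      exact hx.2 this
    have hbdd : BddAbove (norm ∘ h '' (ball w₀ ρ \ {w₀})) := by
      rw [bddAbove_def]
      refine ⟨C, ?_⟩
      rintro x ⟨v, hv, rfl⟩
      exact hC v ⟨ball_subset_ball (min_le_left δ ρ₀) hv.1, hv.2⟩
    have hupd : DifferentiableOn ℂ (Function.update h w₀ (limUnder (𝓝[≠] w₀) h))
        (ball w₀ ρ) :=
      Complex.differentiableOn_update_limUnder_of_bddAbove (ball_mem_nhds w₀ hρpos)
        hdiff hbdd
    have hupdAt : DifferentiableAt ℂ (Function.update h w₀ (limUnder (𝓝[≠] w₀) h)) w₀ :=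
      hupd.differentiableAt (ball_mem_nhds w₀ hρpos)
    apply hupdAt.congr_of_eventuallyEq
    filter_upwards [ball_mem_nhds w₀ hρpos] with v hv
    by_cases hv0 : v = w₀
    · subst hv0
      simp only [hgdef, if_pos hw₀, Function.update_self]
    · have hvA : v ∉ A := by
        intro hvA
        have : v ∈ ball w₀ ρ ∩ A := ⟨hv, hvA⟩
        rw [hball] at this
        exact hv0 this
      simp only [hgdef, if_neg hvA, Function.update_of_ne hv0]
  · -- away from A
    have hAopen : IsOpen Aᶜ := hAc.isOpen_compl
    have hAt : DifferentiableAt ℂ h w₀ := hd.differentiableAt (hAopen.mem_nhds hw₀)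
    apply hAt.congr_of_eventuallyEq
    filter_upwards [hAopen.mem_nhds hw₀] with v hv
    exact hgh v hv


end RatExpAux

open RatExpAux

theorem periodic_meromorphic_is_rational_in_exp
    (u : ℂ → ℂ) (hu : MeromorphicOnPlane u)
    (hper : ∀ z : ℂ, u (z + 2 * Real.pi * Complex.I) = u z)
    (hpoles : {z : ℂ | IsPoleAt u z ∧ 0 ≤ z.im ∧ z.im < 2 * Real.pi}.Finite)
    (hvalues : ∀ ζ : ℂ,
      {z : ℂ | AnalyticAt ℂ u z ∧ u z = ζ ∧ 0 ≤ z.im ∧ z.im < 2 * Real.pi}.Finite) :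
    ∃ p q : Polynomial ℂ, IsCoprime p q ∧ q ≠ 0 ∧
      ∀ z : ℂ, ¬ IsPoleAt u z →
        Polynomial.eval (Complex.exp z) q ≠ 0 ∧
        u z = Polynomial.eval (Complex.exp z) p / Polynomial.eval (Complex.exp z) q := by
  classical
  have pi_pos := Real.pi_pos
  set c : ℂ := 2 * Real.pi * Complex.I with hc
  have hperP : Function.Periodic u c := hper
  have hperint : ∀ (n : ℤ) (z : ℂ), u (z + n * c) = u z := fun n z => (hperP.int_mul n) z
  have hueq : ∀ (n : ℤ) (t : ℂ), u (t - n * c) = u t := by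
    intro n t
    conv_rhs => rw [show t = (t - n * c) + n * c by ring]
    rw [hperint n (t - n * c)]
  -- pole shift
  have hpole_shift : ∀ (n : ℤ) (z : ℂ), IsPoleAt u z → IsPoleAt u (z + n * c) := by
    intro n z hz
    have hmap : Tendsto (fun t : ℂ => t - n * c) (𝓝[≠] (z + n * c)) (𝓝[≠] z) := by
      apply tendsto_nhdsWithin_of_tendsto_nhds_of_eventually_within
      · have h1 : Tendsto (fun t : ℂ => t - n * c) (𝓝 (z + n * c)) (𝓝 (z + n * c - n * c)) :=
          (continuous_sub_right _).tendsto _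
        rw [add_sub_cancel_right] at h1
        exact h1.mono_left nhdsWithin_le_nhds
      · filter_upwards [eventually_mem_nhdsWithin] with t ht h0
        apply ht
        rw [Set.mem_singleton_iff] at h0 ⊢
        rw [sub_eq_iff_eq_add] at h0
        exact h0
    have h2 := hz.comp hmap
    apply h2.congr
    intro t
    simp only [Function.comp]
    rw [hueq n t]
  -- not both analytic and pole
  have hnotboth : ∀ z, AnalyticAt ℂ u z → ¬ IsPoleAt u z := by
    intro z hz hp
    have h1 : Tendsto (fun t => ‖u t‖) (𝓝[≠] z) (𝓝 ‖u z‖) :=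
      (hz.continuousAt.norm.tendsto).mono_left nhdsWithin_le_nhds
    exact not_tendsto_atTop_of_tendsto_nhds h1 hp
  have huanal : ∀ z : ℂ, ¬ IsPoleAt u z → AnalyticAt ℂ u z :=
    fun z hz => (hu z).resolve_right hz
  -- strip and pole set
  set S : Set ℂ := {z | 0 ≤ z.im ∧ z.im < 2 * Real.pi} with hS
  set E : Set ℂ := Complex.exp '' {z | IsPoleAt u z ∧ z ∈ S} with hE
  have hEfin : E.Finite := (hpoles.subset (fun z hz => ⟨hz.1, hz.2⟩)).image _
  -- strip normalization
  have hcim : c.im = 2 * Real.pi := by simp [hc]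
  have hkim : ∀ (k : ℤ), ((k : ℂ) * c).im = k * (2 * Real.pi) := by
    intro k
    rw [Complex.mul_im]
    simp [hcim]
  have hexpc : ∀ (k : ℤ), Complex.exp ((k : ℂ) * c) = 1 := fun k =>
    Complex.exp_int_mul_two_pi_mul_I k
  have hstrip : ∀ z : ℂ, ∃ k : ℤ, (z - k * c) ∈ S ∧
      Complex.exp (z - k * c) = Complex.exp z ∧ u (z - k * c) = u z := by
    intro z
    set k : ℤ := ⌊z.im / (2 * Real.pi)⌋ with hk
    refine ⟨k, ?_, ?_, hueq k z⟩
    · have him : (z - k * c).im = z.im - k * (2 * Real.pi) := by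
        rw [Complex.sub_im, hkim]
      constructor
      · rw [him]
        exact Int.sub_floor_div_mul_nonneg z.im (by positivity)
      · rw [him]
        exact Int.sub_floor_div_mul_lt z.im (by positivity)
    · rw [Complex.exp_sub, hexpc, div_one]
  -- pole membership characterization
  have hmemP_iff : ∀ z : ℂ, IsPoleAt u z ↔ Complex.exp z ∈ E := by
    intro z
    constructor
    · intro hz
      obtain ⟨k, hk1, hk2, -⟩ := hstrip z
      have hz' : IsPoleAt u (z - k * c) := by
        have := hpole_shift (-k) z hz
        rw [show z + (-k : ℤ) * c = z - k * c by push_cast; ring] at this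
        exact this
      exact ⟨z - k * c, ⟨hz', hk1⟩, hk2⟩
    · rintro ⟨z', ⟨hz'P, hz'S⟩, hexp⟩
      obtain ⟨m, hm⟩ := Complex.exp_eq_exp_iff_exists_int.mp hexp.symm
      rw [hm]
      exact hpole_shift m z' hz'P
  -- finite fibers of u on the strip
  have hfibu : ∀ ζ : ℂ, {z : ℂ | u z = ζ ∧ z ∈ S}.Finite := by
    intro ζ
    apply ((hvalues ζ).union hpoles).subset
    rintro z ⟨hzζ, hzS⟩
    rcases hu z with h | h
    · exact Or.inl ⟨h, hzζ, hzS.1, hzS.2⟩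
    · exact Or.inr ⟨h, hzS.1, hzS.2⟩
  -- the function R
  set R : ℂ → ℂ := fun w => u (Complex.log w) with hR
  have hRexp : ∀ z : ℂ, R (Complex.exp z) = u z := by
    intro z
    obtain ⟨m, hm⟩ := Complex.exp_eq_exp_iff_exists_int.mp
      (Complex.exp_log (Complex.exp_ne_zero z))
    rw [hR]
    simp only
    rw [hm, hperint]
  have hfibR : ∀ ζ : ℂ, {w : ℂ | w ≠ 0 ∧ R w = ζ}.Finite := by
    intro ζ
    apply ((hfibu ζ).image Complex.exp).subset
    rintro w ⟨hw0, hwζ⟩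
    obtain ⟨k, hk1, hk2, hk3⟩ := hstrip (Complex.log w)
    exact ⟨Complex.log w - k * c, ⟨by rw [hk3]; exact hwζ, hk1⟩,
      by rw [hk2, Complex.exp_log hw0]⟩
  -- local branches of log
  have hbranch : ∀ w₀ : ℂ, w₀ ≠ 0 → ∃ ℓ : ℂ → ℂ, AnalyticAt ℂ ℓ w₀ ∧
      ℓ w₀ = Complex.log w₀ ∧ ∀ᶠ v in 𝓝 w₀, Complex.exp (ℓ v) = v ∧ R v = u (ℓ v) := by
    intro w₀ hw₀
    set ℓ : ℂ → ℂ := fun v => Complex.log w₀ + Complex.log (v / w₀) with hℓ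
    have hinner : AnalyticAt ℂ (fun v : ℂ => v / w₀) w₀ := by
      apply AnalyticAt.div analyticAt_id analyticAt_const hw₀
    have hlog1 : AnalyticAt ℂ Complex.log (w₀ / w₀) := by
      rw [div_self hw₀]
      exact analyticAt_clog Complex.one_mem_slitPlane
    have han : AnalyticAt ℂ ℓ w₀ := analyticAt_const.add (AnalyticAt.comp (f := fun v : ℂ => v / w₀) hlog1 hinner)
    have hval : ℓ w₀ = Complex.log w₀ := by
      rw [hℓ]
      simp [div_self hw₀, Complex.log_one]
    refine ⟨ℓ, han, hval, ?_⟩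
    filter_upwards [isOpen_compl_singleton.mem_nhds (hw₀ : w₀ ∈ ({0}ᶜ : Set ℂ))] with v hv
    have hv0 : v ≠ 0 := hv
    have hexpℓ : Complex.exp (ℓ v) = v := by
      rw [hℓ]
      simp only
      rw [Complex.exp_add, Complex.exp_log hw₀, Complex.exp_log (div_ne_zero hv0 hw₀)]
      rw [mul_comm, div_mul_cancel₀ v hw₀]
    refine ⟨hexpℓ, ?_⟩
    have hexpeq : Complex.exp (Complex.log v) = Complex.exp (ℓ v) := by
      rw [Complex.exp_log hv0, hexpℓ]
    obtain ⟨m, hm⟩ := Complex.exp_eq_exp_iff_exists_int.mp hexpeq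
    rw [hR]
    simp only
    rw [hm, hperint]
  -- analyticity of R away from E and 0
  have hRanal : ∀ w₀ : ℂ, w₀ ∉ E → w₀ ≠ 0 → AnalyticAt ℂ R w₀ := by
    intro w₀ hE0 hw₀
    obtain ⟨ℓ, hℓan, hℓval, hℓev⟩ := hbranch w₀ hw₀
    have hlogP : ¬ IsPoleAt u (Complex.log w₀) := by
      rw [hmemP_iff, Complex.exp_log hw₀]
      exact hE0
    have huan : AnalyticAt ℂ u (ℓ w₀) := by rw [hℓval]; exact huanal _ hlogP
    apply (huan.comp hℓan).congr
    filter_upwards [hℓev] with v hv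
    exact hv.2.symm
  -- bad set A
  set A : Set ℂ := insert 0 E with hA
  have hAfin : A.Finite := hEfin.insert 0
  have h0A : (0 : ℂ) ∈ A := Set.mem_insert 0 E
  have hnotA : ∀ w : ℂ, w ∉ A → w ≠ 0 ∧ w ∉ E := by
    intro w hw
    constructor
    · intro h; exact hw (h ▸ h0A)
    · intro h; exact hw (Set.mem_insert_of_mem _ h)
  -- exponents at bad points
  have hexp_bound : ∀ a : ℂ, ∃ (n : ℕ) (C δ : ℝ), 0 ≤ C ∧ 0 < δ ∧
      (a ∈ A → ∀ w ∈ ball a δ \ {a}, w ∉ A ∧ ‖(w - a) ^ n * R w‖ ≤ C) := by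
    intro a
    by_cases ha : a ∈ A
    · obtain ⟨ρ, hρpos, hρ⟩ := exists_sep hAfin a
      have havoid : ∀ w ∈ ball a ρ \ {a}, w ∉ A := by
        intro w hw hwA
        have hwa : w ≠ a := fun h => hw.2 (by rw [h]; exact rfl)
        have h1 := hρ w hwA hwa
        have h2 := mem_ball.mp hw.1
        rw [dist_comm] at h2
        linarith
      have hdiff : DifferentiableOn ℂ R (ball a ρ \ {a}) := by
        intro w hw
        obtain ⟨hw0, hwE⟩ := hnotA w (havoid w hw)
        exact ((hRanal w hwE hw0).differentiableAt).differentiableWithinAt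
      have hfib : ∀ ζ, {w | w ∈ ball a ρ \ {a} ∧ R w = ζ}.Finite := by
        intro ζ
        apply (hfibR ζ).subset
        rintro w ⟨hw1, hw2⟩
        exact ⟨(hnotA w (havoid w hw1)).1, hw2⟩
      obtain ⟨n, C, δ, hC, hδ, hbd⟩ := exists_pow_bounded hρpos hdiff hfib
      refine ⟨n, C, min δ ρ, hC, lt_min hδ hρpos, fun _ w hw => ?_⟩
      refine ⟨havoid w ⟨ball_subset_ball (min_le_right _ _) hw.1, hw.2⟩,
        hbd w ⟨ball_subset_ball (min_le_left _ _) hw.1, hw.2⟩⟩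
    · exact ⟨0, 0, 1, le_refl 0, one_pos, fun h => absurd h ha⟩
  choose N Cb Db hCb hDb hbd using hexp_bound
  -- polynomial Q
  set Afin : Finset ℂ := hAfin.toFinset with hAfinDef
  have hmemAfin : ∀ a, a ∈ Afin ↔ a ∈ A := fun a => Set.Finite.mem_toFinset hAfin
  set Q : Polynomial ℂ := ∏ a ∈ Afin, (Polynomial.X - Polynomial.C a) ^ (N a) with hQ
  have hQeval : ∀ w, Q.eval w = ∏ a ∈ Afin, (w - a) ^ (N a) := by
    intro w
    rw [hQ, Polynomial.eval_prod]
    apply Finset.prod_congr rfl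
    intro a _
    simp
  have hQne : ∀ w ∉ A, Q.eval w ≠ 0 := by
    intro w hw
    rw [hQeval]
    apply Finset.prod_ne_zero_iff.mpr
    intro a ha
    apply pow_ne_zero
    rw [sub_ne_zero]
    intro h
    exact hw (h ▸ (hmemAfin a).mp ha)
  have hQ0 : Q ≠ 0 := by
    obtain ⟨w, hw⟩ := hAfin.infinite_compl.nonempty
    intro h
    exact hQne w hw (by rw [h]; simp)
  -- glue
  set F : ℂ → ℂ := fun w => Q.eval w * R w with hF
  have hFd : DifferentiableOn ℂ F Aᶜ := by
    intro w hw
    obtain ⟨hw0, hwE⟩ := hnotA w hw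
    exact (((Polynomial.differentiable Q).differentiableAt).mul
      (hRanal w hwE hw0).differentiableAt).differentiableWithinAt
  have hFb : ∀ a ∈ A, ∃ δ > 0, ∃ C, ∀ w ∈ ball a δ \ {a}, ‖F w‖ ≤ C := by
    intro a ha
    have haf : a ∈ Afin := (hmemAfin a).mpr ha
    have hcont : Continuous (fun w : ℂ => ∏ b ∈ Afin.erase a, (w - b) ^ (N b)) := by
      apply continuous_finset_prod
      intro b _
      exact (continuous_id.sub continuous_const).pow _
    obtain ⟨M, hM⟩ := (isCompact_closedBall a 1).exists_bound_of_continuousOn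
      hcont.continuousOn
    refine ⟨min (Db a) 1, lt_min (hDb a) one_pos, Cb a * M, ?_⟩
    intro w hw
    have hw1 : w ∈ ball a (Db a) \ {a} :=
      ⟨ball_subset_ball (min_le_left _ _) hw.1, hw.2⟩
    have hw2 : w ∈ closedBall a 1 :=
      ball_subset_closedBall (ball_subset_ball (min_le_right _ _) hw.1)
    have hbd1 := (hbd a ha w hw1).2
    have hM1 := hM w hw2
    have hfact : F w = ((w - a) ^ (N a) * R w) * (∏ b ∈ Afin.erase a, (w - b) ^ (N b)) := by
      rw [hF]
      simp only
      rw [hQeval, ← Finset.mul_prod_erase Afin _ haf]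
      ring
    rw [hfact, norm_mul]
    exact mul_le_mul hbd1 hM1 (norm_nonneg _) (hCb a)
  obtain ⟨g, hgd, hgh⟩ := glue_entire hAfin hFd hFb
  -- growth of R at infinity
  have hAway : ∃ ρA : ℝ, 0 < ρA ∧ ∀ v : ℂ, ρA ≤ ‖v‖ → v ∉ A := by
    obtain ⟨ρ₁, hρ₁⟩ := hAfin.isBounded.subset_closedBall 0
    refine ⟨max ρ₁ 0 + 1, by positivity, ?_⟩
    intro v hv hvA
    have := hρ₁ hvA
    rw [mem_closedBall, dist_zero_right] at this
    have h1 : ρ₁ ≤ max ρ₁ 0 := le_max_left _ _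
    linarith
  have hinv : ∃ (m : ℕ) (Ci ρi : ℝ), 0 ≤ Ci ∧ 0 < ρi ∧
      ∀ v : ℂ, ρi ≤ ‖v‖ → v ∉ A ∧ ‖R v‖ ≤ Ci * ‖v‖ ^ m := by
    obtain ⟨ρA, hρApos, hρA⟩ := hAway
    have hrinf : 0 < ρA⁻¹ := by positivity
    have hdiff : DifferentiableOn ℂ (fun w => R w⁻¹) (ball 0 ρA⁻¹ \ {0}) := by
      intro w hw
      have hw0 : w ≠ 0 := fun h => hw.2 (by rw [h]; exact rfl)
      have hnormw : ‖w‖ < ρA⁻¹ := by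
        have := mem_ball.mp hw.1
        rwa [dist_zero_right] at this
      have hvA : w⁻¹ ∉ A := by
        apply hρA
        rw [norm_inv]
        rw [le_inv_comm₀ hρApos (norm_pos_iff.mpr hw0)]
        exact hnormw.le
      obtain ⟨hv0, hvE⟩ := hnotA _ hvA
      exact (((hRanal _ hvE hv0).comp (analyticAt_inv hw0)).differentiableAt).differentiableWithinAt
    have hfib : ∀ ζ, {w | w ∈ ball 0 ρA⁻¹ \ {0} ∧ R w⁻¹ = ζ}.Finite := by
      intro ζ
      apply Set.Finite.of_finite_image (f := fun w : ℂ => w⁻¹) _ (inv_injective.injOn)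
      apply (hfibR ζ).subset
      rintro x ⟨w, ⟨hw1, hw2⟩, rfl⟩
      exact ⟨inv_ne_zero (fun h => hw1.2 (by rw [h]; exact rfl)), hw2⟩
    obtain ⟨m, C, δ, hC, hδ, hbd'⟩ := exists_pow_bounded hrinf hdiff hfib
    refine ⟨m, C, max (δ⁻¹ + 1) ρA, hC, lt_of_lt_of_le hρApos (le_max_right _ _), ?_⟩
    intro v hv
    have hv1 : ρA ≤ ‖v‖ := le_trans (le_max_right _ _) hv
    have hv2 : δ⁻¹ + 1 ≤ ‖v‖ := le_trans (le_max_left _ _) hv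
    have hv0 : v ≠ 0 := by
      intro h
      rw [h, norm_zero] at hv1
      linarith
    refine ⟨hρA v hv1, ?_⟩
    have hw : v⁻¹ ∈ ball (0:ℂ) δ \ {0} := by
      constructor
      · rw [mem_ball, dist_zero_right, norm_inv]
        have hδinv : δ⁻¹ < ‖v‖ := by
          have hnv : (0:ℝ) < ‖v‖ := by
            have : (0:ℝ) < δ⁻¹ + 1 := by positivity
            linarith
          linarith
        calc ‖v‖⁻¹ < (δ⁻¹)⁻¹ := by
              apply inv_strictAnti₀ (by positivity) hδinv
          _ = δ := inv_inv δ
      · exact fun h => hv0 (by simpa using (inv_eq_zero.mp (Set.mem_singleton_iff.mp h)))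
    have hb2 := hbd' v⁻¹ hw
    rw [sub_zero, inv_inv] at hb2
    rw [norm_mul, norm_pow, norm_inv] at hb2
    have hnv : 0 < ‖v‖ := norm_pos_iff.mpr hv0
    calc ‖R v‖ = (‖v‖⁻¹ ^ m * ‖R v‖) * ‖v‖ ^ m := by
          rw [inv_pow]
          field_simp
      _ ≤ C * ‖v‖ ^ m := by
          apply mul_le_mul_of_nonneg_right hb2 (by positivity)
  -- growth of g
  obtain ⟨CQ, hCQ0, hCQ⟩ := poly_eval_bound Q
  obtain ⟨m, Ci, ρi, hCi0, hρi, hRg⟩ := hinv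
  obtain ⟨Mg, hMg⟩ := (isCompact_closedBall (0:ℂ) ρi).exists_bound_of_continuousOn
    hgd.continuous.continuousOn
  have hggrow : ∀ w : ℂ, 1 ≤ ‖w‖ →
      ‖g w‖ ≤ (CQ * Ci + max Mg 0) * ‖w‖ ^ (Q.natDegree + m) := by
    intro w hw1
    have hpow1 : (1:ℝ) ≤ ‖w‖ ^ (Q.natDegree + m) := one_le_pow₀ hw1
    rcases le_or_gt ρi ‖w‖ with hcase | hcase
    · obtain ⟨hwA, hRw⟩ := hRg w hcase
      have hgF : g w = Q.eval w * R w := hgh w hwA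
      rw [hgF, norm_mul]
      calc ‖Q.eval w‖ * ‖R w‖ ≤ (CQ * ‖w‖ ^ Q.natDegree) * (Ci * ‖w‖ ^ m) := by
            apply mul_le_mul (hCQ w hw1) hRw (norm_nonneg _) (by positivity)
        _ = (CQ * Ci) * ‖w‖ ^ (Q.natDegree + m) := by rw [pow_add]; ring
        _ ≤ (CQ * Ci + max Mg 0) * ‖w‖ ^ (Q.natDegree + m) := by
            apply mul_le_mul_of_nonneg_right _ (by positivity)
            have : (0:ℝ) ≤ max Mg 0 := le_max_right _ _
            linarith
    · have h1 : ‖g w‖ ≤ Mg := hMg w (by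
        rw [mem_closedBall, dist_zero_right]; exact hcase.le)
      calc ‖g w‖ ≤ max Mg 0 := le_trans h1 (le_max_left _ _)
        _ ≤ (max Mg 0) * ‖w‖ ^ (Q.natDegree + m) :=
            le_mul_of_one_le_right (le_max_right _ _) hpow1
        _ ≤ (CQ * Ci + max Mg 0) * ‖w‖ ^ (Q.natDegree + m) := by
            apply mul_le_mul_of_nonneg_right _ (by positivity)
            nlinarith
  obtain ⟨Pg, hPg⟩ := poly_liouville (Q.natDegree + m) g _ hgd hggrow
  -- gcd reduction
  set dP : Polynomial ℂ := GCDMonoid.gcd Pg Q with hdP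
  have hdP0 : dP ≠ 0 := gcd_ne_zero_of_right hQ0
  set p : Polynomial ℂ := Pg / dP with hp
  set q : Polynomial ℂ := Q / dP with hq
  have hcop : IsCoprime p q := isCoprime_div_gcd_div_gcd hQ0
  have hpP : dP * p = Pg := EuclideanDomain.mul_div_cancel' hdP0 (gcd_dvd_left Pg Q)
  have hqQ : dP * q = Q := EuclideanDomain.mul_div_cancel' hdP0 (gcd_dvd_right Pg Q)
  have hq0 : q ≠ 0 := fun h => hQ0 (by rw [← hqQ, h, mul_zero])
  refine ⟨p, q, hcop, hq0, ?_⟩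
  intro z hz
  have hw0 : Complex.exp z ≠ 0 := Complex.exp_ne_zero z
  have hwE : Complex.exp z ∉ E := fun h => hz ((hmemP_iff z).mpr h)
  have hwA : Complex.exp z ∉ A := by
    rw [hA]
    intro h
    rcases Set.mem_insert_iff.mp h with h | h
    · exact hw0 h
    · exact hwE h
  have hQw : Q.eval (Complex.exp z) ≠ 0 := hQne _ hwA
  have hdw : dP.eval (Complex.exp z) ≠ 0 := fun h => hQw (by
    rw [← hqQ, Polynomial.eval_mul, h, zero_mul])
  have hqw : q.eval (Complex.exp z) ≠ 0 := fun h => hQw (by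
    rw [← hqQ, Polynomial.eval_mul, h, mul_zero])
  refine ⟨hqw, ?_⟩
  have h1 : Q.eval (Complex.exp z) * R (Complex.exp z) = Pg.eval (Complex.exp z) := by
    rw [← hPg (Complex.exp z), hgh _ hwA, hF]
  have h2 : u z = R (Complex.exp z) := (hRexp z).symm
  rw [h2, eq_div_iff hqw]
  apply mul_right_cancel₀ hdw
  have h3 : Q.eval (Complex.exp z) = dP.eval (Complex.exp z) * q.eval (Complex.exp z) := by
    rw [← hqQ, Polynomial.eval_mul]
  have h4 : Pg.eval (Complex.exp z) = dP.eval (Complex.exp z) * p.eval (Complex.exp z) := by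
    rw [← hpP, Polynomial.eval_mul]
  calc R (Complex.exp z) * q.eval (Complex.exp z) * dP.eval (Complex.exp z)
      = Q.eval (Complex.exp z) * R (Complex.exp z) := by rw [h3]; ring
    _ = Pg.eval (Complex.exp z) := h1
    _ = p.eval (Complex.exp z) * dP.eval (Complex.exp z) := by rw [h4]; ring

end
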